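/- The effective potential V is twice differentiable at ȳ, V′(ȳ) = 0, and V″(ȳ) = −(q μ₀/(2π m²)) p_z I₀ (1+k)³/(k d²). -/

import Mathlib

open Real

/-- The effective potential `V` is twice differentiable at `ȳ = d/(1+k)`,
`V′(ȳ) = 0`, and `V″(ȳ) = −(q μ₀/(2π m²)) p_z I₀ (1+k)³/(k d²)`. -/
theorem second_deriv_V_at_ybar
    (μ₀ d I₀ k m q p_z : ℝ) (hμ : 0 < μ₀) (hd : 0 < d) (hI : I₀ ≠ 0)
    (hk : k ≠ 0) (hk1 : k ≠ -1) (hm : 0 < m)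
    (A₀ Atilde V : ℝ → ℝ)
    (hA : ∀ y : ℝ,
      A₀ y = -(μ₀ / (2 * π)) * (I₀ * Real.log |y| + k * I₀ * Real.log |y - d|))
    (ybar : ℝ) (hybar : ybar = d / (1 + k))
    (hAtilde : ∀ y : ℝ, Atilde y = A₀ y - A₀ ybar)
    (hV : ∀ y : ℝ, V y = (1 / (2 * m ^ 2)) * (p_z - q * Atilde y) ^ 2) :
    DifferentiableAt ℝ V ybar ∧
    DifferentiableAt ℝ (deriv V) ybar ∧
    deriv V ybar = 0 ∧
    deriv (deriv V) ybar
      = -(q * μ₀ / (2 * π * m ^ 2)) * p_z * I₀ * ((1 + k) ^ 3 / (k * d ^ 2)) := by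
  have hπ : (π : ℝ) ≠ 0 := Real.pi_ne_zero
  have hm' : (m : ℝ) ≠ 0 := hm.ne'
  have hd' : d ≠ 0 := hd.ne'
  have hk1' : (1 : ℝ) + k ≠ 0 := fun h => hk1 (by linarith)
  have hy0 : ybar ≠ 0 := by rw [hybar]; exact div_ne_zero hd' hk1'
  have hyd : ybar ≠ d := by
    rw [hybar]
    intro h
    rw [div_eq_iff hk1'] at h
    have hdk : d * k = 0 := by nlinarith [h]
    rcases mul_eq_zero.1 hdk with h' | h'
    · exact hd' h'
    · exact hk h'
  have hyd' : ybar - d ≠ 0 := sub_ne_zero.mpr hyd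
  -- explicit form of V
  have hVf : ∀ y : ℝ, V y = (1 / (2 * m ^ 2)) *
      (p_z - q * (-(μ₀ / (2 * π)) * (I₀ * Real.log y + k * I₀ * Real.log (y - d)) - A₀ ybar)) ^ 2 := by
    intro y
    rw [hV, hAtilde, hA y, Real.log_abs, Real.log_abs]
  -- derivative of the inner function u
  have hu : ∀ y : ℝ, y ≠ 0 → y ≠ d →
      HasDerivAt (fun y : ℝ => p_z - q *
        (-(μ₀ / (2 * π)) * (I₀ * Real.log y + k * I₀ * Real.log (y - d)) - A₀ ybar))
        (-(q * (-(μ₀ / (2 * π)) * (I₀ * y⁻¹ + k * I₀ * (y - d)⁻¹)))) y := by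
    intro y h0 hdy
    have h1 : HasDerivAt (fun y : ℝ => Real.log y) y⁻¹ y := Real.hasDerivAt_log h0
    have h2 : HasDerivAt (fun y : ℝ => Real.log (y - d)) (y - d)⁻¹ y := by
      have := (Real.hasDerivAt_log (sub_ne_zero.mpr hdy)).comp y
        ((hasDerivAt_id y).sub_const d)
      simpa [Function.comp_def] using this
    have h3 := ((h1.const_mul I₀).add (h2.const_mul (k * I₀))).const_mul (-(μ₀ / (2 * π)))
    have h4 := (h3.sub_const (A₀ ybar)).const_mul q
    exact h4.const_sub p_z
  -- the first derivative function W
  set W : ℝ → ℝ := fun y =>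
    (p_z - q * (-(μ₀ / (2 * π)) * (I₀ * Real.log y + k * I₀ * Real.log (y - d)) - A₀ ybar)) *
      (q * (μ₀ / (2 * π)) * (I₀ * y⁻¹ + k * I₀ * (y - d)⁻¹)) / m ^ 2 with hWdef
  have hV' : ∀ y : ℝ, y ≠ 0 → y ≠ d → HasDerivAt V (W y) y := by
    intro y h0 hdy
    have h := ((hu y h0 hdy).pow 2).const_mul (1 / (2 * m ^ 2))
    have hfun : V = fun y : ℝ => (1 / (2 * m ^ 2)) *
        (p_z - q * (-(μ₀ / (2 * π)) * (I₀ * Real.log y + k * I₀ * Real.log (y - d)) - A₀ ybar)) ^ 2 :=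
      funext hVf
    rw [hfun]
    refine h.congr_deriv ?_
    rw [hWdef]
    push_cast
    ring
  have hmem : ({y : ℝ | y ≠ 0} ∩ {y : ℝ | y ≠ d}) ∈ nhds ybar :=
    ((isOpen_ne.inter isOpen_ne).mem_nhds ⟨hy0, hyd⟩)
  have heq : deriv V =ᶠ[nhds ybar] W :=
    Filter.eventuallyEq_of_mem hmem fun y hy => (hV' y hy.1 hy.2).deriv
  -- key values at ybar
  have hByb : I₀ * ybar⁻¹ + k * I₀ * (ybar - d)⁻¹ = 0 := by
    rw [hybar]
    have h5 : d / (1 + k) - d = -(d * k) / (1 + k) := by field_simp; ring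
    rw [h5]
    field_simp
    ring
  have huyb : p_z - q * (-(μ₀ / (2 * π)) *
      (I₀ * Real.log ybar + k * I₀ * Real.log (ybar - d)) - A₀ ybar) = p_z := by
    rw [hA ybar, Real.log_abs, Real.log_abs]
    ring
  -- derivative of W at ybar
  have hB : HasDerivAt (fun y : ℝ => q * (μ₀ / (2 * π)) * (I₀ * y⁻¹ + k * I₀ * (y - d)⁻¹))
      (q * (μ₀ / (2 * π)) * (I₀ * (-(ybar ^ 2)⁻¹) + k * I₀ * (-((ybar - d) ^ 2)⁻¹))) ybar := by
    have h1 : HasDerivAt (fun y : ℝ => y⁻¹) (-(ybar ^ 2)⁻¹) ybar := hasDerivAt_inv hy0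
    have h2 : HasDerivAt (fun y : ℝ => (y - d)⁻¹) (-((ybar - d) ^ 2)⁻¹) ybar := by
      have := (hasDerivAt_inv hyd').comp ybar ((hasDerivAt_id ybar).sub_const d)
      simpa [Function.comp_def] using this
    exact ((h1.const_mul I₀).add (h2.const_mul (k * I₀))).const_mul _
  have hW : HasDerivAt W
      ((-(q * (-(μ₀ / (2 * π)) * (I₀ * ybar⁻¹ + k * I₀ * (ybar - d)⁻¹))) *
        (q * (μ₀ / (2 * π)) * (I₀ * ybar⁻¹ + k * I₀ * (ybar - d)⁻¹)) +
       (p_z - q * (-(μ₀ / (2 * π)) * (I₀ * Real.log ybar + k * I₀ * Real.log (ybar - d)) - A₀ ybar)) *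
        (q * (μ₀ / (2 * π)) * (I₀ * (-(ybar ^ 2)⁻¹) + k * I₀ * (-((ybar - d) ^ 2)⁻¹)))) / m ^ 2)
      ybar :=
    ((hu ybar hy0 hyd).mul hB).div_const (m ^ 2)
  refine ⟨(hV' ybar hy0 hyd).differentiableAt, ?_, ?_, ?_⟩
  · exact hW.differentiableAt.congr_of_eventuallyEq heq
  · rw [(hV' ybar hy0 hyd).deriv, hWdef]
    simp only
    rw [hByb]
    ring
  · rw [heq.deriv_eq, hW.deriv, hByb, huyb]
    have h5 : ybar - d = -(d * k) / (1 + k) := by rw [hybar]; field_simp; ring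
    rw [h5, hybar]
    field_simp
    ring
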